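/- arXiv:2109.01035 — 3 statements merged into one kernel-verified Lean document; each statement's English description precedes it below -/
import Mathlib

section
/- Let m ∈ ℕ, m ≥ 1, and let α > π(m−1). Then (α^m/m!) · ∫_1^∞ c̃_{1,(m+1)/2} (y²−1)^{−(m+1)/2} · exp{ −(α/π) ∫_y^∞ (t²−1)^{−1} dt } dy = (α^m Γ((m+1)/2))/(m·2^m·√π·Γ(m/2)) · Γ(α/(2π) − (m−1)/2)/Γ(α/(2π) + (m+1)/2), where c̃_{1,(m+1)/2} = Γ((m+1)/2)/(√π Γ(m/2)). -/
open MeasureTheory Real Set Filter Topology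

lemma real_beta {a b : ℝ} (ha : 0 < a) (hb : 0 < b) :
    ∫ u in Set.Ioo (0:ℝ) 1, u ^ (a - 1) * (1 - u) ^ (b - 1) =
      Real.Gamma a * Real.Gamma b / Real.Gamma (a + b) := by
  have key := Complex.Gamma_mul_Gamma_eq_betaIntegral (s := (a:ℂ)) (t := (b:ℂ))
    (by simpa using ha) (by simpa using hb)
  have hbeta : Complex.betaIntegral a b =
      ((∫ u in (0:ℝ)..1, u ^ (a - 1) * (1 - u) ^ (b - 1) : ℝ) : ℂ) := by
    rw [Complex.betaIntegral, ← intervalIntegral.integral_ofReal]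
    refine intervalIntegral.integral_congr fun x hx => ?_
    rw [Set.uIcc_of_le (by norm_num : (0:ℝ) ≤ 1)] at hx
    push_cast
    rw [Complex.ofReal_cpow hx.1, Complex.ofReal_cpow (by linarith [hx.2] : (0:ℝ) ≤ 1 - x)]
    push_cast
    ring
  rw [hbeta, ← Complex.ofReal_add, Complex.Gamma_ofReal, Complex.Gamma_ofReal,
    Complex.Gamma_ofReal, ← Complex.ofReal_mul, ← Complex.ofReal_mul] at key
  have := Complex.ofReal_injective key
  have hG : Real.Gamma (a + b) ≠ 0 := (Real.Gamma_pos_of_pos (by linarith)).ne'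
  rw [intervalIntegral.integral_of_le (by norm_num : (0:ℝ) ≤ 1),
    MeasureTheory.integral_Ioc_eq_integral_Ioo] at this
  rw [eq_div_iff hG, mul_comm, ← this]

lemma inner_int {y : ℝ} (hy : 1 < y) :
    ∫ t in Set.Ioi y, (t ^ 2 - 1)⁻¹ =
      (Real.log (y + 1) - Real.log (y - 1)) / 2 := by
  have hderiv : ∀ t ∈ Set.Ici y,
      HasDerivAt (fun t : ℝ => (Real.log (t - 1) - Real.log (t + 1)) / 2)
        ((t ^ 2 - 1)⁻¹) t := by
    intro t ht
    have ht1 : 1 < t := lt_of_lt_of_le hy ht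
    have h1 : t - 1 ≠ 0 := by linarith
    have h2 : t + 1 ≠ 0 := by linarith
    have d1 : HasDerivAt (fun t : ℝ => Real.log (t - 1)) (t - 1)⁻¹ t := by
      simpa using (((hasDerivAt_id t).sub_const 1).log h1)
    have d2 : HasDerivAt (fun t : ℝ => Real.log (t + 1)) (t + 1)⁻¹ t := by
      simpa using (((hasDerivAt_id t).add_const 1).log h2)
    have : HasDerivAt (fun t : ℝ => (Real.log (t - 1) - Real.log (t + 1)) / 2)
        (((t - 1)⁻¹ - (t + 1)⁻¹) / 2) t := (d1.sub d2).div_const 2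
    convert this using 1
    have h3 : t ^ 2 - 1 ≠ 0 := by nlinarith
    field_simp
    ring
  have hpos : ∀ t ∈ Set.Ioi y, (0:ℝ) ≤ (t ^ 2 - 1)⁻¹ := by
    intro t ht
    have : (1:ℝ) < t := lt_trans hy ht
    have h : 0 < t ^ 2 - 1 := by nlinarith
    positivity
  have htend : Tendsto (fun t : ℝ => (Real.log (t - 1) - Real.log (t + 1)) / 2)
      atTop (𝓝 0) := by
    have h1 : Tendsto (fun t : ℝ => 2 / (t + 1)) atTop (𝓝 0) :=
      Filter.Tendsto.div_atTop tendsto_const_nhds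
        (tendsto_atTop_add_const_right _ 1 tendsto_id)
    have h2 : Tendsto (fun t : ℝ => (t - 1) / (t + 1)) atTop (𝓝 1) := by
      have := (tendsto_const_nhds (x := (1:ℝ)) (f := atTop)).sub h1
      rw [sub_zero] at this
      refine this.congr' ?_
      filter_upwards [eventually_gt_atTop (0:ℝ)] with t ht
      have : t + 1 ≠ 0 := by linarith
      field_simp
      ring
    have h3 : Tendsto (fun t : ℝ => Real.log ((t - 1) / (t + 1))) atTop (𝓝 0) := by
      have := ((Real.continuousAt_log one_ne_zero).tendsto.comp h2)
      simpa [Function.comp_def] using this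
    have h4 : Tendsto (fun t : ℝ => Real.log (t - 1) - Real.log (t + 1)) atTop (𝓝 0) := by
      refine h3.congr' ?_
      filter_upwards [eventually_gt_atTop (1:ℝ)] with t ht
      rw [Real.log_div (by linarith) (by linarith)]
    simpa using h4.div_const 2
  have := integral_Ioi_of_hasDerivAt_of_nonneg' hderiv hpos htend
  rw [this]
  ring

/-- Explicit evaluation of the external angle sum `𝕀*_{α,m}(1)` of beta* polytopes
(case `λ = 1`, i.e. `β = (d+1)/2`), for `m ≥ 1` and `α > π(m−1)`. -/
theorem I_star_one_eval (m : ℕ) (hm : 1 ≤ m) (α : ℝ) (hα : α > Real.pi * ((m : ℝ) - 1)) :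
    (α ^ m / (Nat.factorial m : ℝ)) *
      ∫ y in Set.Ioi (1 : ℝ),
        (Real.Gamma (((m : ℝ) + 1) / 2) / (Real.sqrt Real.pi * Real.Gamma ((m : ℝ) / 2))) *
          (y ^ 2 - 1) ^ (-(((m : ℝ) + 1) / 2)) *
          Real.exp (-(α / Real.pi) * ∫ t in Set.Ioi y, (t ^ 2 - 1)⁻¹)
      = (α ^ m * Real.Gamma (((m : ℝ) + 1) / 2))
          / ((m : ℝ) * 2 ^ m * Real.sqrt Real.pi * Real.Gamma ((m : ℝ) / 2)) *
          (Real.Gamma (α / (2 * Real.pi) - ((m : ℝ) - 1) / 2)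
            / Real.Gamma (α / (2 * Real.pi) + ((m : ℝ) + 1) / 2)) := by
  have hπ : (0:ℝ) < Real.pi := Real.pi_pos
  set s : ℝ := α / (2 * Real.pi) with hs_def
  set p : ℝ := ((m : ℝ) + 1) / 2 with hp_def
  have hm1 : (1:ℝ) ≤ (m:ℝ) := by exact_mod_cast hm
  have hs : ((m:ℝ) - 1) / 2 < s := by
    rw [hs_def, lt_div_iff₀ (by positivity)]
    nlinarith
  have hs0 : 0 < s := lt_of_le_of_lt (by linarith) hs
  set c : ℝ := Real.Gamma (((m : ℝ) + 1) / 2) / (Real.sqrt Real.pi * Real.Gamma ((m : ℝ) / 2))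
    with hc_def
  -- Step 1: simplify integrand
  have step1 : ∀ y ∈ Set.Ioi (1:ℝ),
      c * (y ^ 2 - 1) ^ (-p) * Real.exp (-(α / Real.pi) * ∫ t in Set.Ioi y, (t ^ 2 - 1)⁻¹)
        = c * ((y ^ 2 - 1) ^ (-p) * ((y - 1) / (y + 1)) ^ s) := by
    intro y hy
    rw [Set.mem_Ioi] at hy
    rw [inner_int hy]
    have h1 : (0:ℝ) < y - 1 := by linarith
    have h2 : (0:ℝ) < y + 1 := by linarith
    have hq : (0:ℝ) < (y - 1) / (y + 1) := by positivity
    rw [Real.rpow_def_of_pos hq, Real.log_div h1.ne' h2.ne']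
    rw [mul_assoc]
    congr 2
    congr 1
    rw [hs_def]
    field_simp
    ring
  rw [MeasureTheory.setIntegral_congr_fun measurableSet_Ioi step1,
    MeasureTheory.integral_const_mul]
  -- Step 2: change of variables
  set g : ℝ → ℝ := fun u => (1 + u) / (1 - u) with hg_def
  have himg : Set.Ioi (1:ℝ) = g '' Set.Ioo 0 1 := by
    ext y
    constructor
    · intro hy
      rw [Set.mem_Ioi] at hy
      have h2 : (0:ℝ) < y + 1 := by linarith
      refine ⟨(y - 1) / (y + 1), ⟨div_pos (by linarith) h2, ?_⟩, ?_⟩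
      · rw [div_lt_one h2]; linarith
      · show (1 + (y - 1) / (y + 1)) / (1 - (y - 1) / (y + 1)) = y
        rw [div_eq_iff]
        · field_simp
          ring
        · intro h
          rw [sub_eq_zero] at h
          have := (div_lt_one h2).2 (by linarith : y - 1 < y + 1)
          rw [← h] at this
          exact lt_irrefl _ this
    · rintro ⟨u, ⟨hu0, hu1⟩, rfl⟩
      show 1 < (1 + u) / (1 - u)
      rw [lt_div_iff₀ (by linarith)]
      linarith
  have hinj : Set.InjOn g (Set.Ioo 0 1) := by
    intro u hu v hv h
    simp only [hg_def] at h
    rw [div_eq_div_iff (by linarith [hu.2]) (by linarith [hv.2])] at h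
    nlinarith
  have hderiv : ∀ u ∈ Set.Ioo (0:ℝ) 1,
      HasDerivWithinAt g (2 / (1 - u) ^ 2) (Set.Ioo 0 1) u := by
    intro u hu
    have h1 : 1 - u ≠ 0 := by linarith [hu.2]
    have : HasDerivAt g ((1 * (1 - u) - (1 + u) * -1) / (1 - u) ^ 2) u :=
      (((hasDerivAt_id u).const_add 1).div ((hasDerivAt_id u).const_sub 1) h1)
    refine HasDerivAt.hasDerivWithinAt ?_
    exact this.congr_deriv (by ring)
  rw [himg, MeasureTheory.integral_image_eq_integral_abs_deriv_smul measurableSet_Ioo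
    hderiv hinj]
  -- Step 3: simplify the new integrand
  have step3 : ∀ u ∈ Set.Ioo (0:ℝ) 1,
      |2 / (1 - u) ^ 2| • (((g u) ^ 2 - 1) ^ (-p) * ((g u - 1) / (g u + 1)) ^ s)
        = (2 * (4:ℝ) ^ (-p)) * (u ^ (s - p + 1 - 1) * (1 - u) ^ ((m:ℝ) - 1)) := by
    intro u hu
    obtain ⟨hu0, hu1⟩ := hu
    have h1u : (0:ℝ) < 1 - u := by linarith
    have hne : (1 - u) ^ 2 ≠ 0 := by positivity
    have habs : |2 / (1 - u) ^ 2| = 2 / (1 - u) ^ 2 := abs_of_pos (by positivity)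
    have hgsq : (g u) ^ 2 - 1 = 4 * u / (1 - u) ^ 2 := by
      simp only [hg_def]
      field_simp
      ring
    have hgr : (g u - 1) / (g u + 1) = u := by
      simp only [hg_def]
      rw [div_eq_iff, div_add' _ _ _ h1u.ne', div_sub' h1u.ne']
      · field_simp
        ring
      · intro h
        have : g u + 1 > 0 := by
          simp only [hg_def]; positivity
        linarith
    rw [habs, smul_eq_mul, hgsq, hgr]
    have e1 : (4 * u / (1 - u) ^ 2 : ℝ) ^ (-p)
        = (4:ℝ) ^ (-p) * u ^ (-p) / ((1 - u) ^ 2 : ℝ) ^ (-p) := by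
      rw [Real.div_rpow (by positivity) (by positivity), Real.mul_rpow (by norm_num) hu0.le]
    have e2 : ((1 - u) ^ 2 : ℝ) ^ (-p) = (1 - u) ^ (-((m:ℝ) + 1)) := by
      rw [← Real.rpow_natCast (1 - u) 2, ← Real.rpow_mul h1u.le]
      congr 1
      rw [hp_def]
      push_cast
      ring
    have e3 : (1 - u) ^ (-((m:ℝ) + 1)) = ((1 - u) ^ ((m:ℝ) - 1) * (1 - u) ^ 2)⁻¹ := by
      rw [Real.rpow_neg h1u.le, ← Real.rpow_natCast (1 - u) 2, ← Real.rpow_add h1u]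
      congr 2
      push_cast
      ring
    have e4 : u ^ (-p) * u ^ s = u ^ (s - p + 1 - 1) := by
      rw [← Real.rpow_add hu0]
      congr 1
      ring
    rw [e1, e2, e3, show s - p + 1 - 1 = s + -p from by ring, Real.rpow_add hu0]
    simp only [div_eq_mul_inv, inv_inv]
    field_simp
  rw [MeasureTheory.setIntegral_congr_fun measurableSet_Ioo step3,
    MeasureTheory.integral_const_mul,
    real_beta (by linarith : (0:ℝ) < s - p + 1) (by exact_mod_cast Nat.pos_of_ne_zero (by omega) : (0:ℝ) < (m:ℝ))]
  -- Step 4: final arithmetic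
  have hGm : Real.Gamma ((m:ℝ)) = (Nat.factorial (m - 1) : ℝ) := by
    have : (m:ℝ) = ((m - 1 : ℕ) : ℝ) + 1 := by
      have : m - 1 + 1 = m := Nat.succ_pred_eq_of_pos hm
      exact_mod_cast (by omega : (m:ℤ) = ((m-1:ℕ):ℤ) + 1)
    rw [this, Real.Gamma_nat_eq_factorial]
  have hfact : (Nat.factorial m : ℝ) = (m:ℝ) * (Nat.factorial (m - 1) : ℝ) := by
    have : m = (m - 1) + 1 := (Nat.succ_pred_eq_of_pos hm).symm
    rw [this, Nat.factorial_succ]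
    push_cast [← this]
    rfl
  have h4p : (2:ℝ) * (4:ℝ) ^ (-p) = ((2:ℝ) ^ m)⁻¹ := by
    have h4 : (4:ℝ) ^ (-p) = (2:ℝ) ^ (-((m:ℝ) + 1)) := by
      rw [show (4:ℝ) = (2:ℝ) ^ (2:ℕ) by norm_num, ← Real.rpow_natCast (2:ℝ) 2,
        ← Real.rpow_mul (by norm_num)]
      congr 1
      rw [hp_def]
      push_cast
      ring
    rw [h4, show (2:ℝ) = (2:ℝ) ^ (1:ℝ) from (Real.rpow_one 2).symm]
    nth_rewrite 1 [show ((2:ℝ)^(1:ℝ)) ^ (-((m:ℝ)+1)) = (2:ℝ) ^ (-((m:ℝ)+1)) by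
      rw [Real.rpow_one]]
    rw [← Real.rpow_add (by norm_num : (0:ℝ) < 2),
      show (1:ℝ) + -((m:ℝ)+1) = -(m:ℝ) by ring,
      Real.rpow_neg (by norm_num : (0:ℝ) ≤ 2), Real.rpow_natCast]
    norm_num
  have harg1 : s - p + 1 = s - ((m:ℝ) - 1) / 2 := by rw [hp_def]; ring
  rw [harg1, show s - ((m:ℝ) - 1) / 2 + (m:ℝ) = s + ((m:ℝ) + 1) / 2 from by ring,
    hGm, hfact, h4p, hc_def, hp_def]
  have hG1 : (0:ℝ) < Real.Gamma (s + ((m:ℝ) + 1) / 2) :=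
    Real.Gamma_pos_of_pos (by positivity)
  have hG2 : (0:ℝ) < Real.Gamma ((m:ℝ) / 2) :=
    Real.Gamma_pos_of_pos (by positivity)
  have hmn : ((m:ℝ)) ≠ 0 := by positivity
  have hfn : ((Nat.factorial (m-1) : ℝ)) ≠ 0 := by positivity
  have hsp : Real.sqrt Real.pi ≠ 0 := by positivity
  have h2m : ((2:ℝ) ^ m) ≠ 0 := by positivity
  field_simp
end

section
/- Let m ∈ ℕ, m ≥ 1, and α > 0. Then (α^m/m!) · ∫_1^∞ c̃_{1,m+1/2} (y²−1)^{−(m+1/2)} · exp{ −(α/2) ∫_y^∞ (t²−1)^{−3/2} dt } dy = √(α e^α / π) · C(2m−1, m) · K_{m−1/2}(α/2), where K_ν(z) = (√π (z/2)^ν / Γ(ν+1/2)) ∫_1^∞ e^{−zt}(t²−1)^{ν−1/2} dt is the modified Bessel function of the second kind and C(2m−1,m) is the binomial coefficient. -/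
open MeasureTheory Real

/-- The modified Bessel function of the second kind, defined for `ν, z > 0` by
`K_ν(z) = (√π (z/2)^ν / Γ(ν+1/2)) ∫_1^∞ e^{−zt}(t²−1)^{ν−1/2} dt`. -/
noncomputable def besselK (ν z : ℝ) : ℝ :=
  Real.sqrt Real.pi * (z / 2) ^ ν / Real.Gamma (ν + 1 / 2) *
    ∫ t in Set.Ioi (1 : ℝ), Real.exp (-z * t) * (t ^ 2 - 1) ^ (ν - 1 / 2)

namespace IStarAux

open Set Filter Topology

noncomputable def gg (y : ℝ) : ℝ := y / Real.sqrt (y ^ 2 - 1)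

lemma sq_sub_pos {y : ℝ} (hy : 1 < y) : 0 < y ^ 2 - 1 := by nlinarith

lemma sqrt_pos' {y : ℝ} (hy : 1 < y) : 0 < Real.sqrt (y ^ 2 - 1) :=
  Real.sqrt_pos.2 (sq_sub_pos hy)

lemma gg_gt_one {y : ℝ} (hy : 1 < y) : 1 < gg y := by
  rw [gg, lt_div_iff₀ (sqrt_pos' hy), one_mul]
  calc Real.sqrt (y ^ 2 - 1) < Real.sqrt (y ^ 2) := by
        apply Real.sqrt_lt_sqrt (by nlinarith); linarith
    _ = y := by rw [Real.sqrt_sq (by linarith)]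

lemma gg_sq_sub_one {y : ℝ} (hy : 1 < y) : gg y ^ 2 - 1 = (y ^ 2 - 1)⁻¹ := by
  have h := sq_sub_pos hy
  rw [gg, div_pow, Real.sq_sqrt h.le]
  field_simp
  ring

lemma gg_invol {y : ℝ} (hy : 1 < y) : gg (gg y) = y := by
  have h := sq_sub_pos hy
  have hs := sqrt_pos' hy
  have h2 : gg (gg y) = gg y / Real.sqrt ((y ^ 2 - 1)⁻¹) := by
    rw [gg, gg_sq_sub_one hy]
  rw [h2, Real.sqrt_inv, gg]
  field_simp

lemma hasDerivAt_gg {y : ℝ} (hy : 1 < y) :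
    HasDerivAt gg (-((y ^ 2 - 1) ^ (-(3 : ℝ) / 2))) y := by
  have h := sq_sub_pos hy
  have hs := sqrt_pos' hy
  have h1 : HasDerivAt (fun t : ℝ => t ^ 2 - 1) (2 * y) y := by
    simpa using ((hasDerivAt_pow 2 y).sub_const 1)
  have h2 : HasDerivAt (fun t : ℝ => Real.sqrt (t ^ 2 - 1))
      (1 / (2 * Real.sqrt (y ^ 2 - 1)) * (2 * y)) y :=
    (Real.hasDerivAt_sqrt h.ne').comp y h1
  have h3 : HasDerivAt gg
      ((1 * Real.sqrt (y ^ 2 - 1) - y * (1 / (2 * Real.sqrt (y ^ 2 - 1)) * (2 * y))) /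
        (Real.sqrt (y ^ 2 - 1)) ^ 2) y :=
    (hasDerivAt_id y).div h2 hs.ne'
  convert h3 using 1
  have hsq : Real.sqrt (y ^ 2 - 1) ^ 2 = y ^ 2 - 1 := Real.sq_sqrt h.le
  have hrpow : (y ^ 2 - 1) ^ (-(3 : ℝ) / 2) = (Real.sqrt (y ^ 2 - 1) * (y ^ 2 - 1))⁻¹ := by
    rw [show (-(3:ℝ)/2) = -(1/2 + 1) by norm_num, Real.rpow_neg h.le, Real.rpow_add h,
      Real.rpow_one, ← Real.sqrt_eq_rpow]
  rw [hrpow]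
  set s := Real.sqrt (y ^ 2 - 1) with hsdef
  rw [← hsq]
  have hs0 : s ≠ 0 := hs.ne'
  field_simp
  linear_combination (-1) * hsq

lemma tendsto_gg : Tendsto gg atTop (𝓝 1) := by
  have h1 : Tendsto (fun y : ℝ => y ^ 2 - 1) atTop atTop := by
    simpa [sub_eq_add_neg] using
      tendsto_atTop_add_const_right atTop (-1 : ℝ) (tendsto_pow_atTop two_ne_zero)
  have h2 : Tendsto (fun y : ℝ => 1 + (y ^ 2 - 1)⁻¹) atTop (𝓝 1) := by
    simpa using tendsto_const_nhds.add h1.inv_tendsto_atTop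
  have h3 : Tendsto (fun y : ℝ => Real.sqrt (1 + (y ^ 2 - 1)⁻¹)) atTop (𝓝 1) := by
    have := (Real.continuous_sqrt.tendsto 1).comp h2
    simpa [Function.comp_def] using this
  apply h3.congr'
  filter_upwards [eventually_gt_atTop (1 : ℝ)] with y hy
  have h := sq_sub_pos hy
  rw [gg, show 1 + (y ^ 2 - 1)⁻¹ = y ^ 2 / (y ^ 2 - 1) by field_simp; ring,
    Real.sqrt_div (by positivity), Real.sqrt_sq (by linarith)]

lemma inner_int {y : ℝ} (hy : 1 < y) :
    (∫ t in Ioi y, (t ^ 2 - 1) ^ (-(3 : ℝ) / 2)) = gg y - 1 := by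
  have key := integral_Ioi_of_hasDerivAt_of_nonneg (a := y) (l := -1)
    (g := fun t => -gg t) (g' := fun t => (t ^ 2 - 1) ^ (-(3 : ℝ) / 2))
    ((hasDerivAt_gg hy).continuousAt.neg).continuousWithinAt
    (fun x hx => by have := (hasDerivAt_gg (hy.trans hx)).neg; rwa [neg_neg] at this)
    (fun x hx => (Real.rpow_pos_of_pos (sq_sub_pos (hy.trans hx)) _).le)
    tendsto_gg.neg
  rw [key]; ring

lemma image_gg : gg '' Ioi 1 = Ioi 1 := by
  apply Set.Subset.antisymm
  · rintro _ ⟨y, hy, rfl⟩; exact gg_gt_one hy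
  · intro u hu; exact ⟨gg u, gg_gt_one hu, gg_invol hu⟩

lemma injOn_gg : Set.InjOn gg (Ioi 1) := fun a ha b hb hab => by
  rw [← gg_invol ha, ← gg_invol hb, hab]

lemma subst (f : ℝ → ℝ) : (∫ u in Ioi (1 : ℝ), f u)
    = ∫ y in Ioi (1 : ℝ), |(-((y ^ 2 - 1) ^ (-(3 : ℝ) / 2)))| • f (gg y) := by
  conv_lhs => rw [← image_gg]
  exact integral_image_eq_integral_abs_deriv_smul measurableSet_Ioi
    (fun x hx => (hasDerivAt_gg hx).hasDerivWithinAt) injOn_gg f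

lemma scalar (k : ℕ) (α : ℝ) (hα : 0 < α) :
    α ^ (k + 1) / (Nat.factorial (k + 1) : ℝ) *
      (Real.Gamma (((k + 1 : ℕ) : ℝ) + 1 / 2) /
        (Real.sqrt Real.pi * Real.Gamma ((k + 1 : ℕ) : ℝ)) * Real.exp (α / 2))
    = Real.sqrt (α * Real.exp α / Real.pi) * (Nat.choose (2 * (k + 1) - 1) (k + 1) : ℝ) *
        (Real.sqrt Real.pi * (α / 2 / 2) ^ (((k + 1 : ℕ) : ℝ) - 1 / 2) /
          Real.Gamma (((k + 1 : ℕ) : ℝ) - 1 / 2 + 1 / 2)) := by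
  have hπ : (0 : ℝ) < Real.pi := Real.pi_pos
  have hsπ : (0 : ℝ) < Real.sqrt Real.pi := Real.sqrt_pos.2 hπ
  have hsα : (0 : ℝ) < Real.sqrt α := Real.sqrt_pos.2 hα
  have hΓm : Real.Gamma ((k + 1 : ℕ) : ℝ) = (Nat.factorial k : ℝ) := by
    push_cast
    exact_mod_cast Real.Gamma_nat_eq_factorial k
  have hΓ2m : Real.Gamma (2 * ((k + 1 : ℕ) : ℝ)) = (Nat.factorial (2 * k + 1) : ℝ) := by
    rw [show 2 * ((k + 1 : ℕ) : ℝ) = ((2 * k + 1 : ℕ) : ℝ) + 1 by push_cast; ring]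
    exact_mod_cast Real.Gamma_nat_eq_factorial (2 * k + 1)
  have h2 : (2 : ℝ) ^ (1 - 2 * ((k + 1 : ℕ) : ℝ)) = ((2 : ℝ) ^ (2 * k + 1))⁻¹ := by
    rw [show 1 - 2 * ((k + 1 : ℕ) : ℝ) = -((2 * k + 1 : ℕ) : ℝ) by push_cast; ring,
      Real.rpow_neg (by norm_num), Real.rpow_natCast]
  have hdup := Real.Gamma_mul_Gamma_add_half ((k + 1 : ℕ) : ℝ)
  rw [hΓm, hΓ2m, h2] at hdup
  have hΓhalf : Real.Gamma (((k + 1 : ℕ) : ℝ) + 1 / 2)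
      = (Nat.factorial (2 * k + 1) : ℝ) * ((2 : ℝ) ^ (2 * k + 1))⁻¹ * Real.sqrt Real.pi /
        (Nat.factorial k : ℝ) := by
    have hk : (Nat.factorial k : ℝ) ≠ 0 := by positivity
    field_simp at hdup ⊢
    linarith [hdup]
  have hchoose : ((Nat.choose (2 * (k + 1) - 1) (k + 1)) : ℝ)
      = (Nat.factorial (2 * k + 1) : ℝ) /
        ((Nat.factorial (k + 1) : ℝ) * (Nat.factorial k : ℝ)) := by
    rw [show 2 * (k + 1) - 1 = 2 * k + 1 from by omega,
      Nat.cast_choose ℝ (show k + 1 ≤ 2 * k + 1 by omega),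
      show 2 * k + 1 - (k + 1) = k from by omega]
  have hsqrt : Real.sqrt (α * Real.exp α / Real.pi)
      = Real.sqrt α * Real.exp (α / 2) / Real.sqrt Real.pi := by
    rw [Real.sqrt_div (by positivity), Real.sqrt_mul hα.le, ← Real.exp_half]
  have hb : (0 : ℝ) < α / 2 / 2 := by linarith
  have hrp : (α / 2 / 2) ^ (((k + 1 : ℕ) : ℝ) - 1 / 2)
      = (α / 2 / 2) ^ (k + 1) * (2 / Real.sqrt α) := by
    rw [show (((k + 1 : ℕ) : ℝ) - 1 / 2) = ((k + 1 : ℕ) : ℝ) - (1 / 2 : ℝ) by ring,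
      Real.rpow_sub hb, Real.rpow_natCast,
      show ((1 : ℝ) / 2) = ((1 : ℝ) / 2 : ℝ) from rfl]
    have : (α / 2 / 2) ^ ((1 : ℝ) / 2) = Real.sqrt α / 2 := by
      rw [← Real.sqrt_eq_rpow, show α / 2 / 2 = α / 4 by ring,
        Real.sqrt_div hα.le, show Real.sqrt 4 = 2 by
          rw [show (4 : ℝ) = 2 ^ 2 by norm_num, Real.sqrt_sq (by norm_num)]]
    rw [this]
    field_simp
  rw [hΓm, hΓhalf, hchoose, hsqrt, hrp,
    show (((k + 1 : ℕ) : ℝ) - 1 / 2 + 1 / 2) = ((k + 1 : ℕ) : ℝ) by ring, hΓm]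
  have hk : (Nat.factorial k : ℝ) ≠ 0 := by positivity
  have hk1 : (Nat.factorial (k + 1) : ℝ) ≠ 0 := by positivity
  have h4 : ((α / 2 / 2) : ℝ) ^ (k + 1) = α ^ (k + 1) / (2 * 2 ^ (2 * k + 1)) := by
    rw [div_pow, div_pow, div_div, ← pow_add,
      show k + 1 + (k + 1) = (2 * k + 1) + 1 by ring, pow_succ]
    ring
  rw [h4]
  have hsα' : Real.sqrt α ≠ 0 := hsα.ne'
  have hsπ' : Real.sqrt Real.pi ≠ 0 := hsπ.ne'
  field_simp

end IStarAux

/-- Evaluation of the external angle sum `𝕀*_{α,m}(2)` of beta* polytopes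
(case `λ = 2`, i.e. `β = (d+2)/2`) in terms of the modified Bessel function of the
second kind: for `m ≥ 1` and `α > 0`. Here `c̃_{1,m+1/2} = Γ(m+1/2)/(√π Γ(m))`. -/
theorem I_star_two_eval (m : ℕ) (hm : 1 ≤ m) (α : ℝ) (hα : 0 < α) :
    (α ^ m / (Nat.factorial m : ℝ)) *
      ∫ y in Set.Ioi (1 : ℝ),
        (Real.Gamma ((m : ℝ) + 1 / 2) / (Real.sqrt Real.pi * Real.Gamma (m : ℝ))) *
          (y ^ 2 - 1) ^ (-((m : ℝ) + 1 / 2)) *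
          Real.exp (-(α / 2) * ∫ t in Set.Ioi y, (t ^ 2 - 1) ^ (-(3 : ℝ) / 2))
      = Real.sqrt (α * Real.exp α / Real.pi) * (Nat.choose (2 * m - 1) m : ℝ) *
          besselK ((m : ℝ) - 1 / 2) (α / 2) := by
  open IStarAux in
  set C : ℝ := Real.Gamma ((m : ℝ) + 1 / 2) / (Real.sqrt Real.pi * Real.Gamma (m : ℝ)) with hC
  set f : ℝ → ℝ := fun u =>
    Real.exp (-(α / 2) * u) * (u ^ 2 - 1) ^ ((m : ℝ) - 1 / 2 - 1 / 2) with hf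
  have hint : (∫ y in Set.Ioi (1 : ℝ),
        C * (y ^ 2 - 1) ^ (-((m : ℝ) + 1 / 2)) *
          Real.exp (-(α / 2) * ∫ t in Set.Ioi y, (t ^ 2 - 1) ^ (-(3 : ℝ) / 2)))
      = C * Real.exp (α / 2) * ∫ u in Set.Ioi (1 : ℝ), f u := by
    rw [IStarAux.subst f, ← MeasureTheory.integral_const_mul]
    apply setIntegral_congr_fun measurableSet_Ioi
    intro y hy
    have hy : (1 : ℝ) < y := hy
    have h := IStarAux.sq_sub_pos hy
    simp only [hf]
    rw [IStarAux.inner_int hy, abs_neg, abs_of_pos (Real.rpow_pos_of_pos h _), smul_eq_mul,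
      IStarAux.gg_sq_sub_one hy, Real.inv_rpow h.le, ← Real.rpow_neg h.le,
      show -(α / 2) * (IStarAux.gg y - 1) = α / 2 + -(α / 2) * IStarAux.gg y by ring,
      Real.exp_add,
      show (y ^ 2 - 1) ^ (-((m : ℝ) + 1 / 2))
        = (y ^ 2 - 1) ^ (-(3 : ℝ) / 2) * (y ^ 2 - 1) ^ (-((m : ℝ) - 1 / 2 - 1 / 2)) from by
          rw [← Real.rpow_add h]; ring_nf]
    ring
  rw [hint, besselK]
  obtain ⟨k, rfl⟩ : ∃ k, m = k + 1 := ⟨m - 1, (Nat.succ_pred_eq_of_pos hm).symm⟩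
  have hscal := IStarAux.scalar k α hα
  set J : ℝ := ∫ u in Set.Ioi (1 : ℝ), f u with hJ
  calc α ^ (k + 1) / (Nat.factorial (k + 1) : ℝ) * (C * Real.exp (α / 2) * J)
      = (α ^ (k + 1) / (Nat.factorial (k + 1) : ℝ) * (C * Real.exp (α / 2))) * J := by ring
    _ = (Real.sqrt (α * Real.exp α / Real.pi) * (Nat.choose (2 * (k + 1) - 1) (k + 1) : ℝ) *
          (Real.sqrt Real.pi * (α / 2 / 2) ^ (((k + 1 : ℕ) : ℝ) - 1 / 2) /
            Real.Gamma (((k + 1 : ℕ) : ℝ) - 1 / 2 + 1 / 2))) * J := by rw [hC, hscal]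
    _ = _ := by ring
end

section
/- For α > 0, (3α²/8) ∫_0^∞ (sinh φ)^{−4} exp{ −(α/2)(coth φ − 1) } dφ = 3(1 + 2/α). In particular ∫_φ^∞ (sinh θ)^{−2} dθ = coth φ − 1 for every φ > 0. -/
open MeasureTheory Real Filter Set Topology

lemma hderiv_coth {x : ℝ} (hx : 0 < x) :
    HasDerivAt (fun θ : ℝ => Real.cosh θ / Real.sinh θ) (-(1 / Real.sinh x ^ 2)) x := by
  have hs : Real.sinh x ≠ 0 := ne_of_gt (Real.sinh_pos_iff.mpr hx)
  have h := (Real.hasDerivAt_cosh x).div (Real.hasDerivAt_sinh x) hs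
  refine h.congr_deriv ?_
  have hid := Real.cosh_sq_sub_sinh_sq x
  field_simp
  nlinarith [hid]

lemma tendsto_coth_one :
    Tendsto (fun x : ℝ => Real.cosh x / Real.sinh x) atTop (𝓝 1) := by
  have hs : Tendsto Real.sinh atTop atTop := by
    apply tendsto_atTop_mono' atTop _ tendsto_id
    filter_upwards [eventually_ge_atTop (0:ℝ)] with x hx
    exact Real.self_le_sinh_iff.mpr hx
  have h0 : Tendsto (fun x : ℝ => Real.exp (-x) / Real.sinh x) atTop (𝓝 0) :=
    (Real.tendsto_exp_neg_atTop_nhds_zero).div_atTop hs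
  have h1 : Tendsto (fun x : ℝ => 1 + Real.exp (-x) / Real.sinh x) atTop (𝓝 (1 + 0)) :=
    tendsto_const_nhds.add h0
  rw [add_zero] at h1
  apply h1.congr'
  filter_upwards [eventually_gt_atTop (0:ℝ)] with x hx
  have hs' : Real.sinh x ≠ 0 := ne_of_gt (Real.sinh_pos_iff.mpr hx)
  field_simp
  linarith [Real.cosh_sub_sinh x]

lemma tendsto_coth_zero :
    Tendsto (fun x : ℝ => Real.cosh x / Real.sinh x) (𝓝[>] (0:ℝ)) atTop := by
  have h1 : Tendsto Real.sinh (𝓝[>] (0:ℝ)) (𝓝[>] 0) := by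
    apply tendsto_nhdsWithin_of_tendsto_nhds_of_eventually_within
    · simpa using (Real.continuous_sinh.tendsto 0).mono_left nhdsWithin_le_nhds
    · filter_upwards [self_mem_nhdsWithin] with x hx
      exact Real.sinh_pos_iff.mpr hx
  have h2 : Tendsto (fun x => (Real.sinh x)⁻¹) (𝓝[>] (0:ℝ)) atTop :=
    tendsto_inv_nhdsGT_zero.comp h1
  have h3 : Tendsto Real.cosh (𝓝[>] (0:ℝ)) (𝓝 1) := by
    simpa using (Real.continuous_cosh.tendsto 0).mono_left nhdsWithin_le_nhds
  have := h3.pos_mul_atTop one_pos h2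
  simpa [div_eq_mul_inv] using this

noncomputable def Gaux (c u : ℝ) : ℝ :=
  Real.exp (-c * u) * ((u ^ 2 + 2 * u) / c + (2 * u + 2) / c ^ 2 + 2 / c ^ 3)

lemma hasDerivAt_Gaux {c : ℝ} (hc : c ≠ 0) (u : ℝ) :
    HasDerivAt (Gaux c) (-(Real.exp (-c * u) * (u ^ 2 + 2 * u))) u := by
  have he : HasDerivAt (fun v : ℝ => Real.exp (-c * v)) (Real.exp (-c * u) * (-c)) u := by
    simpa using (((hasDerivAt_id u).const_mul (-c)).exp)
  have hp : HasDerivAt (fun v : ℝ => (v ^ 2 + 2 * v) / c + (2 * v + 2) / c ^ 2 + 2 / c ^ 3)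
      ((2 * u + 2) / c + 2 / c ^ 2) u := by
    have h1 : HasDerivAt (fun v : ℝ => (v ^ 2 + 2 * v) / c) ((2 * u + 2) / c) u := by
      have := ((hasDerivAt_pow 2 u).add ((hasDerivAt_id u).const_mul 2)).div_const c
      refine this.congr_deriv ?_
      ring
    have h2 : HasDerivAt (fun v : ℝ => (2 * v + 2) / c ^ 2) (2 / c ^ 2) u := by
      have := (((hasDerivAt_id u).const_mul 2).add_const 2).div_const (c ^ 2)
      refine this.congr_deriv ?_
      ring
    exact (h1.add h2).add_const _
  have := he.mul hp
  refine this.congr_deriv ?_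
  field_simp
  ring

lemma tendsto_Gaux_atTop {c : ℝ} (hc : 0 < c) :
    Tendsto (Gaux c) atTop (𝓝 0) := by
  have key : ∀ n : ℕ, Tendsto (fun u : ℝ => u ^ n * Real.exp (-c * u)) atTop (𝓝 0) := by
    intro n
    apply (tendsto_rpow_mul_exp_neg_mul_atTop_nhds_zero n c hc).congr'
    filter_upwards [eventually_gt_atTop (0:ℝ)] with u hu
    rw [Real.rpow_natCast]
  have h2 := key 2
  have h1 := key 1
  have h0 := key 0
  simp only [pow_one, pow_zero, one_mul] at h1 h0
  have : Tendsto (fun u : ℝ =>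
      (u ^ 2 * Real.exp (-c * u)) / c + (u * Real.exp (-c * u)) * (2 / c + 2 / c ^ 2)
        + Real.exp (-c * u) * (2 / c ^ 2 + 2 / c ^ 3)) atTop
      (𝓝 (0 / c + 0 * (2 / c + 2 / c ^ 2) + 0 * (2 / c ^ 2 + 2 / c ^ 3))) :=
    ((h2.div_const c).add (h1.mul_const _)).add (h0.mul_const _)
  simp only [zero_div, zero_mul, add_zero] at this
  apply this.congr
  intro u
  unfold Gaux
  field_simp
  ring

/-- The external angle sum `𝕀*_{α,2}(2)` of planar beta* polytopes with `β = d = 2`: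
`(3α²/8) ∫_0^∞ (sinh φ)^{−4} exp{−(α/2)(coth φ − 1)} dφ = 3(1 + 2/α)`; in particular
`∫_φ^∞ (sinh θ)^{−2} dθ = coth φ − 1` for every `φ > 0`. -/
theorem I_star_alpha_two_planar (α : ℝ) (hα : 0 < α) :
    (3 * α ^ 2 / 8) * ∫ φ in Set.Ioi (0 : ℝ),
        (Real.sinh φ) ^ (-4 : ℤ) *
          Real.exp (-(α / 2) * (Real.cosh φ / Real.sinh φ - 1))
      = 3 * (1 + 2 / α) ∧
    ∀ φ : ℝ, 0 < φ →
      ∫ θ in Set.Ioi φ, (Real.sinh θ) ^ (-2 : ℤ) = Real.cosh φ / Real.sinh φ - 1 := by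
  constructor
  · -- main integral
    set c : ℝ := α / 2 with hc_def
    have hc : 0 < c := by positivity
    have hcne : c ≠ 0 := ne_of_gt hc
    set F : ℝ → ℝ := fun φ => if 0 < φ then Gaux c (Real.cosh φ / Real.sinh φ - 1) else 0
      with hF_def
    have hFeq : ∀ x ∈ Ioi (0:ℝ), F x = Gaux c (Real.cosh x / Real.sinh x - 1) := by
      intro x hx; simp [hF_def, hx.out]
    have hcont : ContinuousWithinAt F (Ici 0) 0 := by
      rw [← continuousWithinAt_Ioi_iff_Ici]
      have hF0 : F 0 = 0 := by simp [hF_def]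
      unfold ContinuousWithinAt
      rw [hF0]
      have hu : Tendsto (fun φ : ℝ => Real.cosh φ / Real.sinh φ - 1) (𝓝[>] (0:ℝ)) atTop :=
        tendsto_atTop_add_const_right _ (-1) tendsto_coth_zero |>.congr (fun x => by ring_nf)
      have := (tendsto_Gaux_atTop hc).comp hu
      apply this.congr'
      filter_upwards [self_mem_nhdsWithin] with x hx
      simp [hF_def, hx.out, Function.comp]
    have hderiv : ∀ x ∈ Ioi (0:ℝ), HasDerivAt F
        ((Real.sinh x) ^ (-4 : ℤ) * Real.exp (-(α / 2) * (Real.cosh x / Real.sinh x - 1))) x := by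
      intro x hx
      have hxpos : 0 < x := hx
      have hs : Real.sinh x ≠ 0 := ne_of_gt (Real.sinh_pos_iff.mpr hxpos)
      have hu : HasDerivAt (fun θ : ℝ => Real.cosh θ / Real.sinh θ - 1)
          (-(1 / Real.sinh x ^ 2)) x := (hderiv_coth hxpos).sub_const 1
      set u : ℝ := Real.cosh x / Real.sinh x - 1 with hu_def
      have hG := hasDerivAt_Gaux hcne u
      have hcomp := hG.comp x hu
      have heq : F =ᶠ[𝓝 x] fun φ => Gaux c (Real.cosh φ / Real.sinh φ - 1) := by
        filter_upwards [Ioi_mem_nhds hxpos] with y hy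
        simp [hF_def, hy.out]
      have hcomp' : HasDerivAt F
          (-(Real.exp (-c * u) * (u ^ 2 + 2 * u)) * -(1 / Real.sinh x ^ 2)) x :=
        (hcomp : HasDerivAt _ _ x).congr_of_eventuallyEq heq
      convert hcomp' using 1
      have hsq : u ^ 2 + 2 * u = 1 / Real.sinh x ^ 2 := by
        have hid := Real.cosh_sq_sub_sinh_sq x
        have hs2 : Real.sinh x ^ 2 ≠ 0 := pow_ne_zero 2 hs
        have ht2 : (u + 1) * Real.sinh x = Real.cosh x := by
          rw [hu_def]; field_simp
          linarith [Real.cosh_sub_sinh x]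
        rw [eq_div_iff hs2]
        linear_combination ((u + 1) * Real.sinh x + Real.cosh x) * ht2 + hid
      rw [hsq, zpow_neg, hc_def]
      rw [show ((4:ℤ)) = ((4:ℕ):ℤ) by norm_num, zpow_natCast]
      field_simp
    have hpos : ∀ x ∈ Ioi (0:ℝ), 0 ≤
        (Real.sinh x) ^ (-4 : ℤ) * Real.exp (-(α / 2) * (Real.cosh x / Real.sinh x - 1)) := by
      intro x hx
      have : (0:ℝ) < Real.sinh x := Real.sinh_pos_iff.mpr hx.out
      positivity
    have htop : Tendsto F atTop (𝓝 (Gaux c 0)) := by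
      have hu : Tendsto (fun φ : ℝ => Real.cosh φ / Real.sinh φ - 1) atTop (𝓝 0) := by
        have := tendsto_coth_one.sub_const 1
        simpa using this
      have hGc : ContinuousAt (Gaux c) 0 := (hasDerivAt_Gaux hcne 0).continuousAt
      have := hGc.tendsto.comp hu
      apply this.congr'
      filter_upwards [eventually_gt_atTop (0:ℝ)] with x hx
      simp [hF_def, hx, Function.comp]
    have hint := integral_Ioi_of_hasDerivAt_of_nonneg hcont hderiv hpos htop
    rw [hint]
    have hF0 : F 0 = 0 := by simp [hF_def]
    rw [hF0]
    have hG0 : Gaux c 0 = 2 / c ^ 2 + 2 / c ^ 3 := by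
      unfold Gaux; norm_num
    rw [hG0, hc_def]
    have hαne : α ≠ 0 := ne_of_gt hα
    field_simp
    ring
  · -- second part
    intro φ hφ
    have hderiv : ∀ x ∈ Ici φ, HasDerivAt (fun θ : ℝ => -(Real.cosh θ / Real.sinh θ))
        ((Real.sinh x) ^ (-2 : ℤ)) x := by
      intro x hx
      have hxpos : 0 < x := lt_of_lt_of_le hφ hx
      have := (hderiv_coth hxpos).neg
      refine this.congr_deriv ?_
      rw [zpow_neg, show ((2:ℤ)) = ((2:ℕ):ℤ) by norm_num, zpow_natCast]
      rw [neg_neg, one_div]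
    have hpos : ∀ x ∈ Ioi φ, 0 ≤ (Real.sinh x) ^ (-2 : ℤ) := by
      intro x hx
      have : (0:ℝ) < Real.sinh x := Real.sinh_pos_iff.mpr (lt_trans hφ hx)
      positivity
    have htop : Tendsto (fun θ : ℝ => -(Real.cosh θ / Real.sinh θ)) atTop (𝓝 (-1)) :=
      tendsto_coth_one.neg
    have := integral_Ioi_of_hasDerivAt_of_nonneg' hderiv hpos htop
    rw [this]
    ring
end
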